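/- The number of F_{q^2}-rational points of the Hermitian curve attains the Hasse–Weil upper bound: q^3 + 1 = q^2 + 1 + 2g·q where g = q(q−1)/2 is the genus, so the Hermitian curve is a maximal curve over F_{q^2}. -/

import Mathlib

open MvPolynomial

/-- The Hermitian curve over `F_{q²}`: the projectivization of the affine
equation `y + y^q = x^{q+1}` (coordinates `x = X 0`, `y = X 1`, `z = X 2`). -/
noncomputable def hermitianPoly (F : Type*) [Field F] (q : ℕ) : MvPolynomial (Fin 3) F :=
  X 1 * X 2 ^ q + X 1 ^ q * X 2 - X 0 ^ (q + 1)

section Aux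

variable {F : Type*} [Field F] [Fintype F]

lemma card_le_of_roots (P : Polynomial F) (hP : P ≠ 0)
    (S : Set F) (hS : ∀ x ∈ S, P.eval x = 0) : Nat.card S ≤ P.natDegree := by
  classical
  have h : S.toFinset.val ⊆ P.roots := by
    intro x hx
    rw [Polynomial.mem_roots hP]
    exact hS x (by simpa using hx)
  have := Polynomial.card_le_degree_of_subset_roots h
  rwa [Nat.card_eq_card_toFinset] at *

lemma eval_herm (q : ℕ) (v : Fin 3 → F) :
    eval v (hermitianPoly F q) = v 1 * v 2 ^ q + v 1 ^ q * v 2 - v 0 ^ (q + 1) := by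
  simp [hermitianPoly]

lemma herm_smul (q : ℕ) (c : F) (v : Fin 3 → F) :
    eval (c • v) (hermitianPoly F q) = c ^ (q + 1) * eval v (hermitianPoly F q) := by
  simp only [eval_herm, Pi.smul_apply, smul_eq_mul, mul_pow]
  ring

lemma fiber_card (p k q : ℕ) (hp : p.Prime) [CharP F p]
    (hk : 0 < k) (hq : q = p ^ k) (hcard : Fintype.card F = q ^ 2)
    (z : F) (hz : z ≠ 0) (c : F) (hc : c ^ q = c) :
    Nat.card {y : F // y * z ^ q + y ^ q * z = c} = q := by
  classical
  haveI := Fact.mk hp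
  have hq2 : 2 ≤ q := hq ▸ Nat.one_lt_pow hk.ne' hp.one_lt
  have hq0 : 0 < q := by omega
  have hfrob : ∀ a b : F, (a + b) ^ q = a ^ q + b ^ q := by
    intro a b; rw [hq]; exact add_pow_char_pow ..
  have hpowcard : ∀ a : F, a ^ q ^ 2 = a := by
    intro a; rw [← hcard]; exact FiniteField.pow_card a
  let φ : F →+ F :=
    { toFun := fun y => y * z ^ q + y ^ q * z
      map_zero' := by simp [zero_pow hq0.ne']
      map_add' := by
        intro a b
        show (a + b) * z ^ q + (a + b) ^ q * z
          = (a * z ^ q + a ^ q * z) + (b * z ^ q + b ^ q * z)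
        rw [hfrob]; ring }
  have hφapp : ∀ y : F, φ y = y * z ^ q + y ^ q * z := fun y => rfl
  have hker : Nat.card φ.ker ≤ q := by
    have h1 : Nat.card {y : F | φ y = 0} ≤ q := by
      have hne : (Polynomial.C z * Polynomial.X ^ q + Polynomial.C (z ^ q) * Polynomial.X : Polynomial F) ≠ 0 := fun h => by
        have := congrArg (fun P => Polynomial.coeff P q) h
        simp only [Polynomial.coeff_add, Polynomial.coeff_C_mul, Polynomial.coeff_X_pow, Polynomial.coeff_X, ← Polynomial.C_pow, Polynomial.coeff_zero,
          if_pos rfl, mul_one] at this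
        rw [if_neg (by omega : ¬ (1 : ℕ) = q), mul_zero, add_zero] at this
        simp at this
        exact hz this
      have := card_le_of_roots (Polynomial.C z * Polynomial.X ^ q + Polynomial.C (z ^ q) * Polynomial.X) hne
        {y : F | φ y = 0}
        (by intro x hx
            simp only [Set.mem_setOf_eq, hφapp] at hx
            simp only [Polynomial.eval_add, Polynomial.eval_mul, Polynomial.eval_C, Polynomial.eval_pow, Polynomial.eval_X]
            rw [← hx]; ring)
      refine le_trans this ?_
      have hdeg : (Polynomial.C z * Polynomial.X ^ q + Polynomial.C (z ^ q) * Polynomial.X : Polynomial F).natDegree = q := by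
        rw [Polynomial.natDegree_add_eq_left_of_natDegree_lt, Polynomial.natDegree_C_mul_X_pow q z hz]
        rw [Polynomial.natDegree_C_mul_X_pow q z hz]
        exact lt_of_le_of_lt (Polynomial.natDegree_C_mul_le _ _) (by simpa using (show 1 < q by omega))
      omega
    refine le_trans (le_of_eq (Nat.card_congr (Equiv.subtypeEquivRight ?_))) h1
    intro y; simp only [AddMonoidHom.mem_ker, Set.mem_setOf_eq]
  have hXq : (Polynomial.X ^ q - Polynomial.X : Polynomial F) ≠ 0 := fun h => by
    have := congrArg (fun P => Polynomial.coeff P q) h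
    simp only [Polynomial.coeff_sub, Polynomial.coeff_X_pow, Polynomial.coeff_X, Polynomial.coeff_zero, if_pos rfl] at this
    rw [if_neg (by omega : ¬ (1 : ℕ) = q), sub_zero] at this
    exact one_ne_zero this
  have hS : Nat.card {x : F | x ^ q = x} ≤ q := by
    have := card_le_of_roots (Polynomial.X ^ q - Polynomial.X) hXq
      {x : F | x ^ q = x}
      (by intro x hx
          simp only [Set.mem_setOf_eq] at hx
          simp [Polynomial.eval_sub, Polynomial.eval_pow, Polynomial.eval_X, hx])
    refine le_trans this ?_
    rw [Polynomial.natDegree_sub_eq_left_of_natDegree_lt (by simpa using (show 1 < q by omega))]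
    simp
  have hrange_sub : (Set.range φ) ⊆ {x : F | x ^ q = x} := by
    rintro _ ⟨y, rfl⟩
    show (φ y) ^ q = φ y
    rw [hφapp, hfrob, mul_pow, mul_pow, ← pow_mul, ← pow_mul]
    rw [show q * q = q ^ 2 by ring, hpowcard, hpowcard]; ring
  have hrange : Nat.card (Set.range φ) ≤ q :=
    le_trans (Nat.card_mono (Set.toFinite _) hrange_sub) hS
  have hmul : Nat.card F = Nat.card (F ⧸ φ.ker) * Nat.card φ.ker :=
    AddSubgroup.card_eq_card_quotient_mul_card_addSubgroup φ.ker
  have hquot : Nat.card (F ⧸ φ.ker) = Nat.card (Set.range φ) :=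
    Nat.card_congr (QuotientAddGroup.quotientKerEquivRange φ).toEquiv
  have hF : Nat.card F = q ^ 2 := by rw [Nat.card_eq_fintype_card, hcard]
  have hkq : Nat.card φ.ker = q ∧ Nat.card (Set.range φ) = q := by
    rw [hF, hquot] at hmul
    constructor <;> nlinarith [hmul, hker, hrange]
  have hrange_eq : (Set.range φ) = {x : F | x ^ q = x} := by
    apply Set.eq_of_subset_of_ncard_le hrange_sub
    rw [← Nat.card_coe_set_eq, ← Nat.card_coe_set_eq, hkq.2]
    exact hS
  have hc_mem : c ∈ Set.range φ := by rw [hrange_eq]; exact hc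
  obtain ⟨y0, hy0⟩ := hc_mem
  have key : Nat.card {y : F // y * z ^ q + y ^ q * z = c} = Nat.card φ.ker := by
    apply Nat.card_congr
    refine Equiv.subtypeEquiv (Equiv.subRight y0) (fun y => ?_)
    rw [show (y * z ^ q + y ^ q * z = c) ↔ (φ y = c) from Iff.rfl]
    rw [AddMonoidHom.mem_ker]
    simp only [Equiv.subRight_apply, map_sub, hy0, sub_eq_zero]
  rw [key, hkq.1]

/-- counting all affine (vector) solutions -/
lemma vector_count (p k q : ℕ) (hp : p.Prime) [CharP F p]
    (hk : 0 < k) (hq : q = p ^ k) (hcard : Fintype.card F = q ^ 2) :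
    Nat.card {v : Fin 3 → F // eval v (hermitianPoly F q) = 0}
      = q ^ 2 + q ^ 2 * ((q ^ 2 - 1) * q) := by
  classical
  have hq2 : 2 ≤ q := hq ▸ Nat.one_lt_pow hk.ne' hp.one_lt
  have hq0 : 0 < q := by omega
  have hpowcard : ∀ a : F, a ^ q ^ 2 = a := by
    intro a; rw [← hcard]; exact FiniteField.pow_card a
  -- reshape as a sigma type
  have e : {v : Fin 3 → F // eval v (hermitianPoly F q) = 0} ≃
      Σ xz : F × F, {y : F // y * xz.2 ^ q + y ^ q * xz.2 = xz.1 ^ (q + 1)} := by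
    refine
      { toFun := fun v => ⟨(v.1 0, v.1 2), ⟨v.1 1, ?_⟩⟩
        invFun := fun s => ⟨![s.1.1, s.2.1, s.1.2], ?_⟩
        left_inv := ?_
        right_inv := ?_ }
    · have := v.2
      rw [eval_herm] at this
      exact sub_eq_zero.mp this
    · rw [eval_herm]
      show s.2.1 * s.1.2 ^ q + s.2.1 ^ q * s.1.2 - s.1.1 ^ (q + 1) = 0
      rw [s.2.2]; ring
    · intro v
      apply Subtype.ext
      funext i
      fin_cases i <;> rfl
    · rintro ⟨⟨x, z⟩, y, h⟩
      rfl
  rw [Nat.card_congr e, Nat.card_eq_fintype_card, Fintype.card_sigma]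
  rw [Fintype.sum_prod_type]
  have hfib : ∀ x z : F, Fintype.card {y : F // y * z ^ q + y ^ q * z = x ^ (q + 1)}
      = if z = 0 then (if x = 0 then q ^ 2 else 0) else q := by
    intro x z
    by_cases hz : z = 0
    · subst hz
      by_cases hx : x = 0
      · subst hx
        rw [if_pos rfl, if_pos rfl, ← hcard, ← Finset.card_univ]
        exact Fintype.card_of_subtype Finset.univ
          (fun y => by simp [zero_pow hq0.ne', zero_pow (Nat.succ_ne_zero q)])
      · rw [if_pos rfl, if_neg hx]
        rw [Fintype.card_eq_zero_iff]
        refine ⟨fun y => ?_⟩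
        have := y.2
        simp only [zero_pow hq0.ne', mul_zero, add_zero, zero_add] at this
        exact hx (pow_eq_zero_iff (Nat.succ_ne_zero q) |>.mp this.symm)
    · rw [if_neg hz, ← Nat.card_eq_fintype_card]
      refine fiber_card p k q hp hk hq hcard z hz _ ?_
      rw [← pow_mul, show (q + 1) * q = q ^ 2 + q by ring, pow_add, hpowcard, ← pow_succ']
  simp_rw [hfib]
  have h1 : ∀ A : ℕ, ∑ z : F, (if z = 0 then A else q) = A + (q ^ 2 - 1) * q := by
    intro A
    rw [← Finset.add_sum_erase _ _ (Finset.mem_univ (0 : F)), if_pos rfl]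
    congr 1
    rw [Finset.sum_congr rfl (fun z hz => if_neg (Finset.ne_of_mem_erase hz)),
      Finset.sum_const, smul_eq_mul, Finset.card_erase_of_mem (Finset.mem_univ _),
      Finset.card_univ, hcard]
  simp_rw [h1]
  rw [Finset.sum_add_distrib, Finset.sum_ite_eq' Finset.univ (0 : F) (fun _ => q ^ 2),
    if_pos (Finset.mem_univ _), Finset.sum_const, Finset.card_univ, hcard, smul_eq_mul]



lemma proj_count (p k q : ℕ) (hp : p.Prime) [CharP F p]
    (hk : 0 < k) (hq : q = p ^ k) (hcard : Fintype.card F = q ^ 2) :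
    Nat.card {P : Projectivization F (Fin 3 → F) //
      eval P.rep (hermitianPoly F q) = 0} = q ^ 3 + 1 := by
  classical
  have hq2 : 2 ≤ q := hq ▸ Nat.one_lt_pow hk.ne' hp.one_lt
  have hq0 : 0 < q := by omega
  haveI : Finite (Projectivization F (Fin 3 → F)) := Quotient.finite _
  set B := {P : Projectivization F (Fin 3 → F) // eval P.rep (hermitianPoly F q) = 0} with hB
  set A := {v : Fin 3 → F // eval v (hermitianPoly F q) = 0 ∧ v ≠ 0} with hA
  -- homogeneity: eval at rep vanishes
  have hrep0 : ∀ (v : Fin 3 → F) (hv : v ≠ 0), eval v (hermitianPoly F q) = 0 →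
      eval (Projectivization.mk F v hv).rep (hermitianPoly F q) = 0 := by
    intro v hv h0
    obtain ⟨a, ha⟩ := Projectivization.exists_smul_eq_mk_rep F v hv
    rw [← ha, Units.smul_def, herm_smul, h0, mul_zero]
  -- the projection map
  set π : A → B := fun v => ⟨Projectivization.mk F v.1 v.2.2, hrep0 _ _ v.2.1⟩ with hπ
  -- fibers of π are equivalent to Fˣ
  have efiber : ∀ P : B, {v : A // π v = P} ≃ Fˣ := by
    intro P
    have hPrep := P.2
    refine (Equiv.ofBijective (fun a : Fˣ =>
      (⟨⟨a • P.1.rep, ?_, ?_⟩, ?_⟩ : {v : A // π v = P})) ⟨?_, ?_⟩).symm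
    · rw [Units.smul_def, herm_smul, hPrep, mul_zero]
    · rw [Units.smul_def]
      exact smul_ne_zero a.ne_zero (Projectivization.rep_nonzero P.1)
    · apply Subtype.ext
      show Projectivization.mk F (a • P.1.rep) _ = P.1
      refine Eq.trans ?_ (Projectivization.mk_rep P.1)
      rw [Projectivization.mk_eq_mk_iff]
      exact ⟨a, rfl⟩
    · intro a b hab
      have hab : a • P.1.rep = b • P.1.rep := congrArg (fun t => t.1.1) hab
      obtain ⟨i, hi⟩ := Function.ne_iff.mp (Projectivization.rep_nonzero P.1)
      have := congrFun hab i
      simp only [Units.smul_def, Pi.smul_apply, smul_eq_mul] at this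
      exact Units.ext (mul_right_cancel₀ (by simpa using hi) this)
    · rintro ⟨⟨v, h0, hv⟩, hfib⟩
      have : Projectivization.mk F v hv
          = Projectivization.mk F P.1.rep (Projectivization.rep_nonzero P.1) :=
        (congrArg Subtype.val hfib).trans (Projectivization.mk_rep P.1).symm
      rw [Projectivization.mk_eq_mk_iff] at this
      obtain ⟨a, ha⟩ := this
      exact ⟨a, by apply Subtype.ext; apply Subtype.ext; exact ha⟩
  -- hence |A| = |B| * (q² - 1)
  have ecount : A ≃ B × Fˣ :=
    ((Equiv.sigmaFiberEquiv π).symm.trans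
      (Equiv.sigmaCongrRight efiber)).trans (Equiv.sigmaEquivProd B Fˣ)
  have hcountA : Nat.card A = Nat.card B * (q ^ 2 - 1) := by
    rw [Nat.card_congr ecount, Nat.card_prod, Nat.card_units]
    congr 1
    rw [Nat.card_eq_fintype_card, hcard]
  -- compute |A| from the affine count
  have hV := vector_count p k q hp hk hq hcard
  have eA : {v : {w : Fin 3 → F // eval w (hermitianPoly F q) = 0} // ¬ (v.1 = 0)} ≃ A :=
    Equiv.subtypeSubtypeEquivSubtypeInter
      (fun w : Fin 3 → F => eval w (hermitianPoly F q) = 0) (fun w => ¬ w = 0)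
  have hzero : Fintype.card {v : {w : Fin 3 → F // eval w (hermitianPoly F q) = 0} //
      v.1 = 0} = 1 := by
    rw [Fintype.card_eq_one_iff]
    refine ⟨⟨⟨0, ?_⟩, rfl⟩, ?_⟩
    · rw [eval_herm]
      simp [zero_pow hq0.ne', zero_pow (Nat.succ_ne_zero q)]
    · rintro ⟨⟨v, hv⟩, hv0⟩
      apply Subtype.ext; apply Subtype.ext; exact hv0
  have hcardA : Nat.card A + 1 = q ^ 2 + q ^ 2 * ((q ^ 2 - 1) * q) := by
    rw [← Nat.card_congr eA, Nat.card_eq_fintype_card, Fintype.card_subtype_compl, hzero]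
    rw [← hV, Nat.card_eq_fintype_card]
    have : 1 ≤ Fintype.card {w : Fin 3 → F // eval w (hermitianPoly F q) = 0} := by
      rw [← hzero]
      exact Fintype.card_le_of_injective (fun v => v.1) (fun a b hab => Subtype.ext hab)
    omega
  -- final arithmetic
  set m := Nat.card B with hm
  set s := q ^ 2 - 1 with hs
  have hs1 : s + 1 = q ^ 2 := by
    have : 1 ≤ q ^ 2 := Nat.one_le_pow _ _ hq0
    omega
  have hkey : m * s + 1 = (s + 1) + (s + 1) * (s * q) := by
    rw [hs1]; rw [hcountA] at hcardA; exact hcardA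
  have hms : m * s = (q ^ 3 + 1) * s := by
    zify at hkey hs1 ⊢
    linear_combination hkey + (s * q) * hs1
  have hspos : 0 < s := by nlinarith
  exact Nat.eq_of_mul_eq_mul_right hspos hms

end Aux

/-- The Hermitian curve attains the Hasse–Weil upper bound: with genus
`g = q(q-1)/2`, one has `q³ + 1 = q² + 1 + 2gq`, and this is exactly the number
of its `F_{q²}`-rational points; hence the Hermitian curve is maximal. -/
theorem hermitian_is_maximal (F : Type*) [Field F] [Fintype F]
    (p k q : ℕ) (hp : p.Prime) [CharP F p] (hk : 0 < k) (hq : q = p ^ k)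
    (hcard : Fintype.card F = q ^ 2) :
    q ^ 3 + 1 = q ^ 2 + 1 + 2 * (q * (q - 1) / 2) * q ∧
    Nat.card {P : Projectivization F (Fin 3 → F) //
      eval P.rep (hermitianPoly F q) = 0} = q ^ 2 + 1 + 2 * (q * (q - 1) / 2) * q := by
  have harith : q ^ 3 + 1 = q ^ 2 + 1 + 2 * (q * (q - 1) / 2) * q := by
    obtain ⟨r, rfl⟩ : ∃ r, q = r + 1 := ⟨q - 1, by
      have : 2 ≤ q := hq ▸ Nat.one_lt_pow hk.ne' hp.one_lt
      omega⟩
    have h2 : 2 * ((r + 1) * ((r + 1) - 1) / 2) = (r + 1) * r := by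
      rw [Nat.add_sub_cancel, Nat.mul_div_cancel']
      rw [mul_comm]
      exact (Nat.even_mul_succ_self r).two_dvd
    rw [h2]; ring
  exact ⟨harith, by rw [← harith]; exact proj_count p k q hp hk hq hcard⟩
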